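/- Let Π be an instance of NotAllEqual 3-SAT with n clauses and G(Π)=(V,E), b, r the associated construction. In every (b,r)-partition of E, for every clause C (original or copy), among the six edges consisting of the three triangle edges on U^C together with the three matching edges E^C, exactly three belong to the blue spanning tree and exactly three belong to the red spanning tree. -/
import Mathlib


/-!
Common definitions for formalizing the NP-completeness reduction from
NotAllEqual 3-SAT to (b,r)-partitions of graphs.

An instance of NotAllEqual 3-SAT with variables in `α` and `n` clauses is
given by `cl : Fin n → Fin 3 → α`, clause `i` consisting of the three
(distinct) variables `cl i 0, cl i 1, cl i 2`.

The vertex set of the associated graph `G(Π)`: the special vertex `s`,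
the `u`-vertices `u i o j` and the `v`-vertices `v i o j`, where `i : Fin n`
is a clause index, `o : Bool` tells whether we are in the gadget of the
original clause (`false`) or of its copy (`true`), and `j : Fin 3` is the
position of a variable inside the clause.
-/

inductive GVert (n : ℕ) : Type
  | s : GVert n
  | u : Fin n → Bool → Fin 3 → GVert n
  | v : Fin n → Bool → Fin 3 → GVert n
  deriving DecidableEq


/-- The occurrences of the variable `x`: the pairs (clause index, position)
where `x` appears. -/
def occs {α : Type*} [DecidableEq α] {n : ℕ} (cl : Fin n → Fin 3 → α) (x : α) :
    Finset (Fin n × Fin 3) :=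
  Finset.univ.filter (fun p => cl p.1 p.2 = x)

/-- The cyclic successor of an occurrence `p` among the occurrences of the
variable sitting at `p`; this is used to build the cycle `Δ_x`. -/
noncomputable def nextOcc {α : Type*} [DecidableEq α] {n : ℕ}
    (cl : Fin n → Fin 3 → α) (p : Fin n × Fin 3) : Fin n × Fin 3 :=
  (occs cl (cl p.1 p.2)).toList.next p (by simp [occs, Finset.mem_toList])

/-- The edges of `G(Π)`: the star at `s`, the triangles on `U^C`, the
matchings `E^C`, and the cycles `Δ_x` (which alternate `v`-vertices of
original-clause gadgets and of copy gadgets; the cycle for the variable `x`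
is `v p₁ false, v p₁ true, v p₂ false, v p₂ true, …` over the occurrences
`p₁, p₂, …` of `x` in cyclic order). -/
inductive EdgeSpec {α : Type*} [DecidableEq α] {n : ℕ} (cl : Fin n → Fin 3 → α) :
    GVert n → GVert n → Prop
  | star (i : Fin n) (o : Bool) (j : Fin 3) : EdgeSpec cl .s (.u i o j)
  | tri (i : Fin n) (o : Bool) {j j' : Fin 3} (h : j ≠ j') :
      EdgeSpec cl (.u i o j) (.u i o j')
  | mat (i : Fin n) (o : Bool) (j : Fin 3) : EdgeSpec cl (.u i o j) (.v i o j)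
  | cycA (p : Fin n × Fin 3) : EdgeSpec cl (.v p.1 false p.2) (.v p.1 true p.2)
  | cycB (p : Fin n × Fin 3) :
      EdgeSpec cl (.v p.1 true p.2) (.v (nextOcc cl p).1 false (nextOcc cl p).2)

/-- The graph `G(Π)` associated to the NotAllEqual 3-SAT instance. -/
noncomputable def gadgetGraph {α : Type*} [DecidableEq α] {n : ℕ}
    (cl : Fin n → Fin 3 → α) : SimpleGraph (GVert n) :=
  SimpleGraph.fromRel (EdgeSpec cl)

/-- The blue outdegree prescription `b`. -/
def bvec (n : ℕ) : GVert n → ℕ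
  | .s => 3 * n
  | .u _ _ _ => 1
  | .v _ o _ => if o then 0 else 1

/-- The red outdegree prescription `r`. -/
def rvec (n : ℕ) : GVert n → ℕ
  | .s => 3 * n
  | .u _ _ _ => 1
  | .v _ o _ => if o then 1 else 0

/-- `dir` is an orientation of the edge set `F`: every directed pair lies in
`F`, and every edge of `F` gets exactly one direction. -/
def IsOrientation {V : Type*} (F : Set (Sym2 V)) (dir : V → V → Prop) : Prop :=
  (∀ a b, dir a b → s(a, b) ∈ F) ∧
    ∀ a b, s(a, b) ∈ F → (dir a b ∨ dir b a) ∧ ¬(dir a b ∧ dir b a)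

/-- `dir` is an `m`-orientation of `F`: an orientation in which exactly `m v`
arcs leave each vertex `v`. -/
def IsMOrientation {V : Type*} (F : Set (Sym2 V)) (m : V → ℕ)
    (dir : V → V → Prop) : Prop :=
  IsOrientation F dir ∧ ∀ v, Nat.card {w // dir v w} = m v

/-- `B` and `R` partition the edges of `G` into two spanning trees. -/
def IsTreePartition {V : Type*} (G B R : SimpleGraph V) : Prop :=
  B ≤ G ∧ R ≤ G ∧ B.IsTree ∧ R.IsTree ∧
    Disjoint B.edgeSet R.edgeSet ∧ B.edgeSet ∪ R.edgeSet = G.edgeSet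

/-- `(B, R)` is a `(b,r)`-partition of (the edge set of) `G`: a partition
into a blue spanning tree having a `b`-orientation and a red spanning tree
having an `r`-orientation. -/
def IsBRPartition {V : Type*} (G : SimpleGraph V) (b r : V → ℕ)
    (B R : SimpleGraph V) : Prop :=
  IsTreePartition G B R ∧
    (∃ d, IsMOrientation B.edgeSet b d) ∧ ∃ d, IsMOrientation R.edgeSet r d

/-- `G` admits some `(b,r)`-partition. -/
def HasBRPartition {V : Type*} (G : SimpleGraph V) (b r : V → ℕ) : Prop :=
  ∃ B R, IsBRPartition G b r B R

/-- The blue/red coloring `c` (`true` = blue, `false` = red) satisfies the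
NotAllEqual 3-SAT instance: every clause contains a blue and a red variable. -/
def NAESatisfies {α : Type*} {n : ℕ} (cl : Fin n → Fin 3 → α) (c : α → Bool) :
    Prop :=
  ∀ i : Fin n, (∃ j, c (cl i j) = true) ∧ ∃ j, c (cl i j) = false

/-- The matching edge `u^C_x v^C_x` at occurrence `p`, in the original gadget
(`o = false`) or the copy gadget (`o = true`). -/
def mEdge {n : ℕ} (p : Fin n × Fin 3) (o : Bool) : Sym2 (GVert n) :=
  s(GVert.u p.1 o p.2, GVert.v p.1 o p.2)


deriving instance Fintype for GVert

section Stmt8Aux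

variable {α : Type*} [DecidableEq α] {n : ℕ} (cl : Fin n → Fin 3 → α)

lemma gadget_adj_iff {a b : GVert n} :
    (gadgetGraph cl).Adj a b ↔ a ≠ b ∧ (EdgeSpec cl a b ∨ EdgeSpec cl b a) :=
  SimpleGraph.fromRel_adj _ _ _

lemma adj_s {w : GVert n} (h : (gadgetGraph cl).Adj GVert.s w) :
    ∃ i o j, w = GVert.u i o j := by
  rw [gadget_adj_iff] at h
  rcases h.2 with h' | h'
  · cases h'; exact ⟨_, _, _, rfl⟩
  · cases h'

lemma adj_u {i : Fin n} {o : Bool} {j : Fin 3} {w : GVert n}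
    (h : (gadgetGraph cl).Adj (GVert.u i o j) w) :
    w = GVert.s ∨ (∃ j', j ≠ j' ∧ w = GVert.u i o j') ∨ w = GVert.v i o j := by
  rw [gadget_adj_iff] at h
  rcases h.2 with h' | h'
  · cases h' with
    | tri _ _ hne => exact Or.inr (Or.inl ⟨_, hne, rfl⟩)
    | mat => exact Or.inr (Or.inr rfl)
  · cases h' with
    | star => exact Or.inl rfl
    | tri _ _ hne => exact Or.inr (Or.inl ⟨_, hne.symm, rfl⟩)

lemma no_out {d : GVert n → GVert n → Prop} {v : GVert n}
    (hcard : Nat.card {w // d v w} = 0) (w : GVert n) : ¬ d v w := by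
  intro h
  have h1 : Nonempty {w // d v w} := ⟨⟨w, h⟩⟩
  have h2 : 0 < Nat.card {w // d v w} := Nat.card_pos
  omega

lemma unique_out {d : GVert n → GVert n → Prop} {u : GVert n}
    (hcard : Nat.card {w // d u w} = 1) :
    ∃ w, d u w ∧ ∀ w', d u w' → w' = w := by
  obtain ⟨⟨w, hw⟩, hall⟩ := Nat.card_eq_one_iff_exists.mp hcard
  exact ⟨w, hw, fun w' hw' => congrArg Subtype.val (hall ⟨w', hw'⟩)⟩

/-- The six gadget edges. -/
def S6 {n : ℕ} (i : Fin n) (o : Bool) : Set (Sym2 (GVert n)) :=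
  {s(GVert.u i o 0, GVert.u i o 1), s(GVert.u i o 1, GVert.u i o 2),
    s(GVert.u i o 0, GVert.u i o 2), s(GVert.u i o 0, GVert.v i o 0),
    s(GVert.u i o 1, GVert.v i o 1), s(GVert.u i o 2, GVert.v i o 2)}

lemma S6_card {n : ℕ} (i : Fin n) (o : Bool) : (S6 i o).ncard = 6 := by
  rw [S6, Set.ncard_insert_of_notMem (by simp [Sym2.eq_iff]),
    Set.ncard_insert_of_notMem (by simp [Sym2.eq_iff]),
    Set.ncard_insert_of_notMem (by simp [Sym2.eq_iff]),
    Set.ncard_insert_of_notMem (by simp [Sym2.eq_iff]),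
    Set.ncard_insert_of_notMem (by simp [Sym2.eq_iff]), Set.ncard_singleton]

lemma S6_subset (i : Fin n) (o : Bool) : S6 i o ⊆ (gadgetGraph cl).edgeSet := by
  intro e he
  rcases he with rfl | rfl | rfl | rfl | rfl | rfl <;>
    refine ((SimpleGraph.mem_edgeSet _).mpr ((gadget_adj_iff cl).mpr ⟨by simp, Or.inl ?_⟩))
  · exact EdgeSpec.tri i o (by decide)
  · exact EdgeSpec.tri i o (by decide)
  · exact EdgeSpec.tri i o (by decide)
  · exact EdgeSpec.mat i o 0
  · exact EdgeSpec.mat i o 1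
  · exact EdgeSpec.mat i o 2

/-- Count of gadget edges in the tree whose orientation prescribes outdegree 0
at the `v`-vertices. -/
lemma color_count {T : SimpleGraph (GVert n)} (hT : T ≤ gadgetGraph cl)
    {d : GVert n → GVert n → Prop} (hd : IsOrientation T.edgeSet d)
    (i : Fin n) (o : Bool)
    (hu : ∀ j : Fin 3, Nat.card {w // d (GVert.u i o j) w} = 1)
    (hv : ∀ (j : Fin 3) (w : GVert n), ¬ d (GVert.v i o j) w)
    (hns : ∀ j : Fin 3, ¬ d (GVert.u i o j) GVert.s) :
    (S6 i o ∩ T.edgeSet).ncard = 3 := by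
  choose w hw huniq using fun j => unique_out (hu j)
  have hmemT : ∀ j, s(GVert.u i o j, w j) ∈ T.edgeSet := fun j => hd.1 _ _ (hw j)
  have himg : S6 i o ∩ T.edgeSet =
      Set.range (fun j : Fin 3 => s(GVert.u i o j, w j)) := by
    ext e
    constructor
    · rintro ⟨he6, heT⟩
      have tri : ∀ a b : Fin 3, e = s(GVert.u i o a, GVert.u i o b) →
          e ∈ Set.range (fun j : Fin 3 => s(GVert.u i o j, w j)) := by
        rintro a b rfl
        rcases (hd.2 _ _ heT).1 with h | h
        · exact ⟨a, by rw [huniq a _ h]⟩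
        · refine ⟨b, ?_⟩
          rw [huniq b _ h]
          exact (Sym2.eq_swap)
      have mat : ∀ a : Fin 3, e = s(GVert.u i o a, GVert.v i o a) →
          e ∈ Set.range (fun j : Fin 3 => s(GVert.u i o j, w j)) := by
        rintro a rfl
        rcases (hd.2 _ _ heT).1 with h | h
        · exact ⟨a, by rw [huniq a _ h]⟩
        · exact absurd h (hv a _)
      rcases he6 with h | h | h | h | h | h
      · exact tri 0 1 h
      · exact tri 1 2 h
      · exact tri 0 2 h
      · exact mat 0 h
      · exact mat 1 h
      · exact mat 2 h
    · rintro ⟨j, rfl⟩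
      refine ⟨?_, hmemT j⟩
      have hadj : (gadgetGraph cl).Adj (GVert.u i o j) (w j) :=
        hT ((SimpleGraph.mem_edgeSet _).mp (hmemT j))
      rcases adj_u cl hadj with h | ⟨j', hne, h⟩ | h
      · exact absurd (h ▸ hw j) (hns j)
      · simp only [h]
        fin_cases j <;> fin_cases j' <;>
          simp_all [S6, Sym2.eq_iff]
      · simp only [h]
        fin_cases j <;> simp [S6]
  rw [himg, ← Set.image_univ,
    Set.ncard_image_of_injective _ ?_, Set.ncard_univ, Nat.card_eq_fintype_card,
    Fintype.card_fin]
  intro a b hab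
  simp only [Sym2.eq_iff] at hab
  rcases hab with ⟨h1, _⟩ | ⟨h1, h2⟩
  · simpa using h1
  · have hda : d (GVert.u i o a) (GVert.u i o b) := h2 ▸ hw a
    have hdb : d (GVert.u i o b) (GVert.u i o a) := by
      have := hw b; rw [← h1] at this; exact this
    exact absurd ⟨hda, hdb⟩ (hd.2 _ _ (hd.1 _ _ hda)).2

/-- In both trees, every star edge is oriented away from `s`. -/
lemma no_arc_into_s {B R : SimpleGraph (GVert n)}
    (hBle : B ≤ gadgetGraph cl) (hRle : R ≤ gadgetGraph cl)
    (hdisj : Disjoint B.edgeSet R.edgeSet)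
    {dB dR : GVert n → GVert n → Prop}
    (hdB : IsMOrientation B.edgeSet (bvec n) dB)
    (hdR : IsMOrientation R.edgeSet (rvec n) dR) :
    (∀ x, ¬ dB x GVert.s) ∧ (∀ x, ¬ dR x GVert.s) := by
  set A : Set (GVert n) := {x | dB GVert.s x} with hA
  set A' : Set (GVert n) := {x | dR GVert.s x} with hA'
  set U : Set (GVert n) :=
    Set.range (fun p : Fin n × Bool × Fin 3 => GVert.u p.1 p.2.1 p.2.2) with hU
  have hUcard : U.ncard = 6 * n := by
    rw [hU, ← Nat.card_coe_set_eq,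
      Nat.card_range_of_injective (f := fun p : Fin n × Bool × Fin 3 =>
        GVert.u p.1 p.2.1 p.2.2)]
    · simp [Nat.card_eq_fintype_card]; ring
    · rintro ⟨a, b, c⟩ ⟨a', b', c'⟩ h
      simpa [Prod.ext_iff] using h
  have hAcard : A.ncard = 3 * n := by
    rw [← Nat.card_coe_set_eq]; exact hdB.2 GVert.s
  have hA'card : A'.ncard = 3 * n := by
    rw [← Nat.card_coe_set_eq]; exact hdR.2 GVert.s
  have hsubB : A ⊆ U := by
    intro x hx
    obtain ⟨i, o, j, rfl⟩ := adj_s cl (hBle ((SimpleGraph.mem_edgeSet _).mp (hdB.1.1 _ _ hx)))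
    exact ⟨(i, o, j), rfl⟩
  have hsubR : A' ⊆ U := by
    intro x hx
    obtain ⟨i, o, j, rfl⟩ := adj_s cl (hRle ((SimpleGraph.mem_edgeSet _).mp (hdR.1.1 _ _ hx)))
    exact ⟨(i, o, j), rfl⟩
  have hAA' : Disjoint A A' := by
    rw [Set.disjoint_left]
    intro x hx hx'
    exact Set.disjoint_left.mp hdisj (hdB.1.1 _ _ hx) (hdR.1.1 _ _ hx')
  have hueq : A ∪ A' = U := by
    refine Set.eq_of_subset_of_ncard_le (Set.union_subset hsubB hsubR) ?_ (Set.toFinite _)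
    rw [Set.ncard_union_eq hAA' (Set.toFinite _) (Set.toFinite _), hUcard, hAcard, hA'card]
    omega
  have key : ∀ x, x ∈ U → dB GVert.s x ∨ dR GVert.s x := by
    intro x hx
    rw [← hueq] at hx
    exact hx
  constructor
  · intro x hx
    have hmem : s(GVert.s, x) ∈ B.edgeSet := by
      rw [Sym2.eq_swap]; exact hdB.1.1 _ _ hx
    have hxU : x ∈ U := by
      obtain ⟨i, o, j, rfl⟩ := adj_s cl (hBle ((SimpleGraph.mem_edgeSet _).mp hmem))
      exact ⟨(i, o, j), rfl⟩
    rcases key x hxU with h | h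
    · exact (hdB.1.2 _ _ hmem).2 ⟨h, hx⟩
    · exact Set.disjoint_left.mp hdisj hmem (hdR.1.1 _ _ h)
  · intro x hx
    have hmem : s(GVert.s, x) ∈ R.edgeSet := by
      rw [Sym2.eq_swap]; exact hdR.1.1 _ _ hx
    have hxU : x ∈ U := by
      obtain ⟨i, o, j, rfl⟩ := adj_s cl (hRle ((SimpleGraph.mem_edgeSet _).mp hmem))
      exact ⟨(i, o, j), rfl⟩
    rcases key x hxU with h | h
    · exact Set.disjoint_left.mp hdisj (hdB.1.1 _ _ h) hmem
    · exact (hdR.1.2 _ _ hmem).2 ⟨h, hx⟩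

end Stmt8Aux

/-- In every `(b,r)`-partition of `G(Π)`, for every clause
gadget (original or copy), among the six edges formed by the triangle on
`U^C` together with the matching `E^C`, exactly three are blue and exactly
three are red. -/
theorem stmt8 {α : Type*} [DecidableEq α] {n : ℕ} (cl : Fin n → Fin 3 → α)
    (hcl : ∀ i, Function.Injective (cl i)) (B R : SimpleGraph (GVert n))
    (hBR : IsBRPartition (gadgetGraph cl) (bvec n) (rvec n) B R) :
    ∀ (i : Fin n) (o : Bool),
      (({s(GVert.u i o 0, GVert.u i o 1), s(GVert.u i o 1, GVert.u i o 2),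
          s(GVert.u i o 0, GVert.u i o 2), s(GVert.u i o 0, GVert.v i o 0),
          s(GVert.u i o 1, GVert.v i o 1), s(GVert.u i o 2, GVert.v i o 2)} :
          Set (Sym2 (GVert n))) ∩ B.edgeSet).ncard = 3 ∧
      (({s(GVert.u i o 0, GVert.u i o 1), s(GVert.u i o 1, GVert.u i o 2),
          s(GVert.u i o 0, GVert.u i o 2), s(GVert.u i o 0, GVert.v i o 0),
          s(GVert.u i o 1, GVert.v i o 1), s(GVert.u i o 2, GVert.v i o 2)} :
          Set (Sym2 (GVert n))) ∩ R.edgeSet).ncard = 3 := by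
  intro i o
  show (S6 i o ∩ B.edgeSet).ncard = 3 ∧ (S6 i o ∩ R.edgeSet).ncard = 3
  obtain ⟨⟨hBle, hRle, hBtree, hRtree, hdisj, hunion⟩, ⟨dB, hdB⟩, ⟨dR, hdR⟩⟩ := hBR
  obtain ⟨hnoB, hnoR⟩ := no_arc_into_s cl hBle hRle hdisj hdB hdR
  have hsub : S6 i o ⊆ (gadgetGraph cl).edgeSet := S6_subset cl i o
  have hsplit : (S6 i o ∩ B.edgeSet).ncard + (S6 i o ∩ R.edgeSet).ncard = 6 := by
    have hdisj2 : Disjoint (S6 i o ∩ B.edgeSet) (S6 i o ∩ R.edgeSet) :=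
      hdisj.mono Set.inter_subset_right Set.inter_subset_right
    rw [← Set.ncard_union_eq hdisj2 (Set.toFinite _) (Set.toFinite _),
      ← Set.inter_union_distrib_left, hunion,
      Set.inter_eq_self_of_subset_left hsub, S6_card]
  cases o with
  | false =>
    have hR3 : (S6 i false ∩ R.edgeSet).ncard = 3 := by
      refine color_count cl hRle hdR.1 i false (fun j => hdR.2 _) ?_ (fun j => hnoR _)
      intro j x
      exact no_out (by simpa [rvec] using hdR.2 (GVert.v i false j)) x
    exact ⟨by omega, hR3⟩
  | true =>
    have hB3 : (S6 i true ∩ B.edgeSet).ncard = 3 := by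
      refine color_count cl hBle hdB.1 i true (fun j => hdB.2 _) ?_ (fun j => hnoB _)
      intro j x
      exact no_out (by simpa [bvec] using hdB.2 (GVert.v i true j)) x
    exact ⟨hB3, by omega⟩
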